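/- Let R be a real Gaussian random variable with mean μ_R and variance σ_R² > 0, and let ς > 0. Then the unconditional pairwise error probability satisfies E[ Q( √(R² / (2ς)) ) ] = (1/π) ∫_0^{π/2} √( 2ς sin² ϑ / (2ς sin² ϑ + σ_R²) ) · exp( −μ_R² / (4ς sin² ϑ + 2σ_R²) ) dϑ. -/

import Mathlib

open MeasureTheory ProbabilityTheory Real

open Set Filter intervalIntegral
open scoped NNReal ENNReal


/-- The Gaussian tail function Q(x) = ∫_x^∞ (1/√(2π)) e^{-t²/2} dt. -/
noncomputable def gaussQ (x : ℝ) : ℝ :=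
  ∫ t in Set.Ioi x, (1 / Real.sqrt (2*π)) * Real.exp (-t^2/2)

noncomputable def phi (t : ℝ) : ℝ := (1 / Real.sqrt (2*π)) * Real.exp (-t^2/2)

lemma phi_cont : Continuous phi := by unfold phi; continuity

lemma phi_integrable : Integrable phi := by
  have h : Integrable (fun t : ℝ => Real.exp (-(1/2) * t^2)) := integrable_exp_neg_mul_sq (by norm_num)
  have h2 : phi = fun t : ℝ => (1 / Real.sqrt (2*π)) * Real.exp (-(1/2) * t^2) := by
    ext t; unfold phi; ring_nf
  rw [h2]; exact h.const_mul _

lemma gaussQ_eq (x : ℝ) : gaussQ x = (∫ t, phi t) - ∫ t in Set.Iic x, phi t := by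
  have := intervalIntegral.integral_Iic_add_Ioi (f := phi) (b := x) (μ := volume)
    phi_integrable.integrableOn phi_integrable.integrableOn
  unfold gaussQ; unfold phi at this ⊢
  linarith

lemma integral_phi : (∫ t, phi t) = 1 := by
  unfold phi
  rw [MeasureTheory.integral_const_mul]
  have h : (fun t : ℝ => Real.exp (-t^2/2)) = fun t : ℝ => Real.exp (-(1/2) * t^2) := by
    ext t; ring_nf
  rw [h, integral_gaussian, show π / (1/2) = 2 * π by ring, one_div, inv_mul_cancel₀]
  positivity

lemma gaussQ_zero : gaussQ 0 = 1/2 := by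
  unfold gaussQ
  rw [MeasureTheory.integral_const_mul]
  have h : ∀ t : ℝ, Real.exp (-t^2/2) = Real.exp (-(1/2) * t^2) := fun t => by ring_nf
  simp_rw [h]
  rw [integral_gaussian_Ioi, show π / (1/2) = 2 * π by ring]
  have : Real.sqrt (2*π) ≠ 0 := by positivity
  field_simp

lemma gaussQ_hasDerivAt (x : ℝ) : HasDerivAt gaussQ (-phi x) x := by
  have h1 : ∀ y : ℝ, gaussQ y = ((∫ t, phi t) - ∫ t in Set.Iic 0, phi t) - ∫ t in (0:ℝ)..y, phi t := by
    intro y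
    rw [gaussQ_eq, ← intervalIntegral.integral_Iic_sub_Iic phi_integrable.integrableOn
      phi_integrable.integrableOn]
    ring
  have h2 : HasDerivAt (fun y : ℝ => ∫ t in (0:ℝ)..y, phi t) (phi x) x := by
    exact intervalIntegral.integral_hasDerivAt_right
      phi_integrable.intervalIntegrable
      phi_cont.aestronglyMeasurable.stronglyMeasurableAtFilter
      phi_cont.continuousAt
  have h3 := (h2.const_sub ((∫ t, phi t) - ∫ t in Set.Iic 0, phi t))
  have : gaussQ = fun y : ℝ => ((∫ t, phi t) - ∫ t in Set.Iic 0, phi t) - ∫ t in (0:ℝ)..y, phi t :=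
    funext h1
  rw [this]
  exact h3


noncomputable def craig (x : ℝ) : ℝ :=
  (1/π) * ∫ θ in (0:ℝ)..(π/2), Real.exp (-x^2/(2 * Real.sin θ^2))

lemma craig_meas (x : ℝ) : Measurable (fun θ : ℝ => Real.exp (-x^2/(2 * Real.sin θ^2))) :=
  ((measurable_const.div ((Real.continuous_sin.measurable.pow_const 2).const_mul 2))).exp

lemma craig_exp_le_one (x θ : ℝ) : Real.exp (-x^2/(2 * Real.sin θ^2)) ≤ 1 := by
  rw [show (1:ℝ) = Real.exp 0 by simp]
  apply Real.exp_le_exp.mpr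
  apply div_nonpos_of_nonpos_of_nonneg
  · simp [sq_nonneg]
  · positivity

lemma craig_zero : craig 0 = 1/2 := by
  unfold craig
  have : ∀ θ : ℝ, Real.exp (-(0:ℝ)^2/(2 * Real.sin θ^2)) = 1 := by intro θ; norm_num
  simp_rw [this]
  simp [pi_ne_zero]
  field_simp

lemma craig_cont : Continuous craig := by
  unfold craig
  refine continuous_const.mul ?_
  have h : ∀ x : ℝ, (∫ θ in (0:ℝ)..(π/2), Real.exp (-x^2/(2 * Real.sin θ^2)))
      = ∫ θ in Set.Ioc (0:ℝ) (π/2), Real.exp (-x^2/(2 * Real.sin θ^2)) := by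
    intro x
    rw [intervalIntegral.integral_of_le (by positivity)]
  simp_rw [h]
  apply MeasureTheory.continuous_of_dominated (bound := fun _ => (1:ℝ))
  · exact fun x => (craig_meas x).aestronglyMeasurable
  · intro x
    filter_upwards with θ
    rw [Real.norm_eq_abs, abs_of_pos (Real.exp_pos _)]
    exact craig_exp_le_one x θ
  · exact integrableOn_const (by simp [Real.volume_Ioc])
  · filter_upwards with θ
    have : (fun x : ℝ => Real.exp (-x^2/(2 * Real.sin θ^2)))
        = fun x : ℝ => Real.exp ((-x^2) * (2 * Real.sin θ^2)⁻¹) := by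
      ext x; rw [div_eq_mul_inv]
    rw [this]
    continuity



lemma phi_def : ∀ t, phi t = (1 / Real.sqrt (2*π)) * Real.exp (-t^2/2) := fun _ => rfl

lemma craig_def : ∀ x, craig x = (1/π) * ∫ θ in (0:ℝ)..(π/2), Real.exp (-x^2/(2 * Real.sin θ^2)) :=
  fun _ => rfl

lemma sin_arctan_sq (y : ℝ) : Real.sin (Real.arctan y) ^ 2 = y^2 / (1 + y^2) := by
  rw [Real.sin_arctan, div_pow, Real.sq_sqrt (by positivity)]

lemma craig_subst (x : ℝ) (hx : 0 < x) :
    ∫ θ in Set.Ioo (0:ℝ) (π/2), (x / Real.sin θ^2) * Real.exp (-x^2/(2*Real.sin θ^2))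
      = Real.exp (-x^2/2) * (Real.sqrt (2*π) / 2) := by
  have hxne : x ≠ 0 := ne_of_gt hx
  set f : ℝ → ℝ := fun t => Real.arctan (x/t) with hf
  set f' : ℝ → ℝ := fun t => -x/(x^2+t^2) with hf'
  set g : ℝ → ℝ := fun θ => (x / Real.sin θ^2) * Real.exp (-x^2/(2*Real.sin θ^2)) with hg
  have himg : f '' Set.Ioi (0:ℝ) = Set.Ioo (0:ℝ) (π/2) := by
    ext θ
    constructor
    · rintro ⟨t, ht, rfl⟩
      refine ⟨?_, Real.arctan_lt_pi_div_two _⟩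
      have := Real.arctan_strictMono (div_pos hx ht)
      rwa [Real.arctan_zero] at this
    · rintro ⟨h1, h2⟩
      have htan : 0 < Real.tan θ := Real.tan_pos_of_pos_of_lt_pi_div_two h1 h2
      refine ⟨x / Real.tan θ, div_pos hx htan, ?_⟩
      have he : x / (x / Real.tan θ) = Real.tan θ := by field_simp
      show Real.arctan (x / (x / Real.tan θ)) = θ
      rw [he]
      exact Real.arctan_tan (by linarith [Real.pi_div_two_pos]) h2
  have hderiv : ∀ t ∈ Set.Ioi (0:ℝ), HasDerivWithinAt f (f' t) (Set.Ioi 0) t := by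
    intro t ht
    have ht0 : t ≠ 0 := ne_of_gt ht
    have h1 : HasDerivAt (fun t : ℝ => x / t) (-x / t^2) t := by
      simpa [div_eq_mul_inv, mul_comm, neg_div] using ((hasDerivAt_inv ht0).const_mul x)
    have h2 := (Real.hasDerivAt_arctan (x/t)).comp t h1
    have he : 1 / (1 + (x/t)^2) * (-x / t^2) = -x/(x^2+t^2) := by
      field_simp
      ring
    rw [he] at h2
    exact h2.hasDerivWithinAt
  have hinj : Set.InjOn f (Set.Ioi 0) := by
    intro a ha b hb hab
    have h2 : x / a = x / b := Real.arctan_injective hab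
    rw [div_eq_div_iff (ne_of_gt ha) (ne_of_gt hb)] at h2
    · exact mul_left_cancel₀ hxne h2.symm
  have key := integral_image_eq_integral_abs_deriv_smul measurableSet_Ioi hderiv hinj g
  rw [himg] at key
  rw [key]
  have hpt : ∀ t ∈ Set.Ioi (0:ℝ), |f' t| • g (f t)
      = Real.exp (-x^2/2) * Real.exp (-(1/2) * t^2) := by
    intro t ht
    have ht0 : (0:ℝ) < t := ht
    have hd : (0:ℝ) < x^2 + t^2 := by positivity
    have habs : |f' t| = x / (x^2+t^2) := by
      rw [hf']
      simp only []
      rw [abs_div, abs_of_nonpos (by linarith : -x ≤ 0), abs_of_pos hd]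
      ring_nf
    have hsin : Real.sin (f t) ^ 2 = x^2 / (x^2 + t^2) := by
      show Real.sin (Real.arctan (x/t)) ^ 2 = _
      rw [sin_arctan_sq]
      rw [div_pow]
      field_simp
      ring
    have hgval : g (f t) = ((x^2+t^2)/x) * Real.exp (-(x^2+t^2)/2) := by
      rw [hg]
      simp only []
      rw [hsin]
      congr 1
      · field_simp
      · congr 1
        field_simp
    rw [smul_eq_mul, habs, hgval]
    rw [← Real.exp_add]
    have : -x^2/2 + -(1/2)*t^2 = -(x^2+t^2)/2 := by ring
    rw [this]
    field_simp
  rw [MeasureTheory.setIntegral_congr_fun measurableSet_Ioi hpt]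
  rw [MeasureTheory.integral_const_mul, integral_gaussian_Ioi]
  congr 1
  rw [show π / (1/2) = 2*π by ring]


-- placeholders for previous parts

lemma sin_sq_pos_of_mem {θ : ℝ} (hθ : θ ∈ Set.Ioc (0:ℝ) (π/2)) : 0 < Real.sin θ ^ 2 := by
  have h1 : 0 < Real.sin θ := Real.sin_pos_of_pos_of_lt_pi hθ.1 (lt_of_le_of_lt hθ.2 (by linarith [Real.pi_pos]))
  positivity

lemma uIoc_eq : Set.uIoc (0:ℝ) (π/2) = Set.Ioc (0:ℝ) (π/2) :=
  Set.uIoc_of_le (by positivity)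

lemma craig_deriv_aux (θ : ℝ) (hs : 0 < Real.sin θ ^ 2) (x : ℝ) :
    HasDerivAt (fun x : ℝ => Real.exp (-x^2/(2 * Real.sin θ^2)))
      (-((x / Real.sin θ^2) * Real.exp (-x^2/(2 * Real.sin θ^2)))) x := by
  set s := Real.sin θ ^ 2
  have h : HasDerivAt (fun x : ℝ => -x^2/(2*s)) (-(2*x^(2-1))/(2*s)) x :=
    ((hasDerivAt_pow 2 x).neg).div_const (2*s)
  have h2 := h.exp
  have he : Real.exp (-x^2/(2*s)) * (-(2*x^(2-1))/(2*s)) = -((x/s) * Real.exp (-x^2/(2*s))) := by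
    field_simp
    ring
  rw [he] at h2
  exact h2

lemma craig_hasDerivAt (x : ℝ) (hx : 0 < x) : HasDerivAt craig (-phi x) x := by
  have hle : (0:ℝ) ≤ π/2 := by positivity
  set F : ℝ → ℝ → ℝ := fun x θ => Real.exp (-x^2/(2 * Real.sin θ^2)) with hF
  set F' : ℝ → ℝ → ℝ := fun x θ => -((x / Real.sin θ^2) * Real.exp (-x^2/(2 * Real.sin θ^2))) with hF'
  have key := intervalIntegral.hasDerivAt_integral_of_dominated_loc_of_deriv_le
    (F := F) (F' := F') (x₀ := x) (a := (0:ℝ)) (b := π/2) (μ := volume)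
    (bound := fun _ => 4/x) (Metric.ball_mem_nhds x (half_pos hx))
    (Filter.Eventually.of_forall fun y => ((craig_meas y).aestronglyMeasurable))
    ?hint ?h'meas ?hbound ?hbint ?hdiff
  · have h2 : HasDerivAt (fun y => (1/π) * ∫ θ in (0:ℝ)..(π/2), F y θ)
        ((1/π) * ∫ θ in (0:ℝ)..(π/2), F' x θ) x := key.2.const_mul (1/π)
    have hc : craig = fun y => (1/π) * ∫ θ in (0:ℝ)..(π/2), F y θ := by
      funext y; exact craig_def y
    rw [hc]
    convert h2 using 1
    have h3 : (∫ θ in (0:ℝ)..(π/2), F' x θ)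
        = - ∫ θ in Set.Ioo (0:ℝ) (π/2), (x / Real.sin θ^2) * Real.exp (-x^2/(2*Real.sin θ^2)) := by
      rw [intervalIntegral.integral_of_le hle, MeasureTheory.integral_Ioc_eq_integral_Ioo]
      rw [← MeasureTheory.integral_neg]
    rw [h3, craig_subst x hx, phi_def]
    have hS : (1:ℝ)/π * (Real.sqrt (2*π)/2) = 1/Real.sqrt (2*π) := by
      have h : Real.sqrt (2*π) * Real.sqrt (2*π) = 2*π := Real.mul_self_sqrt (by positivity)
      have h2 : Real.sqrt (2*π) ≠ 0 := by positivity
      have h3 : (1:ℝ)/Real.sqrt (2*π) = Real.sqrt (2*π)/(2*π) := by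
        rw [div_eq_div_iff h2 (by positivity)]
        linarith [h]
      rw [h3]
      ring
    linear_combination Real.exp (-x^2/2) * hS
  case hint =>
    rw [intervalIntegrable_iff, uIoc_eq]
    refine MeasureTheory.Integrable.mono' (g := fun _ => (1:ℝ)) (integrableOn_const (by simp [Real.volume_Ioc]))
      ((craig_meas x).aestronglyMeasurable.restrict) ?_
    filter_upwards with θ
    rw [Real.norm_eq_abs, abs_of_pos (Real.exp_pos _)]
    exact craig_exp_le_one x θ
  case h'meas =>
    refine Measurable.aestronglyMeasurable ?_
    exact ((measurable_const.div ((Real.continuous_sin.measurable.pow_const 2))).mul (craig_meas x)).neg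
  case hbound =>
    filter_upwards with θ hθ y hy
    rw [uIoc_eq] at hθ
    have hs := sin_sq_pos_of_mem hθ
    set s := Real.sin θ ^ 2
    have hy1 : x/2 < y := by
      have := abs_lt.mp (mem_ball_iff_norm.mp hy)
      linarith [this.1]
    have hy0 : 0 < y := lt_trans (half_pos hx) hy1
    have hnorm : ‖F' y θ‖ = (y/s) * Real.exp (-y^2/(2*s)) := by
      rw [hF']
      simp only [norm_neg, Real.norm_eq_abs]
      rw [abs_of_nonneg (by positivity)]
    rw [hnorm]
    have hu : (y/s) * Real.exp (-y^2/(2*s)) = (2/y) * ((y^2/(2*s)) * Real.exp (-(y^2/(2*s)))) := by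
      rw [neg_div]
      field_simp
    rw [hu]
    have hue : (y^2/(2*s)) * Real.exp (-(y^2/(2*s))) ≤ 1 := by
      set u := y^2/(2*s)
      rw [Real.exp_neg]
      rw [mul_inv_le_iff₀ (Real.exp_pos u), one_mul]
      linarith [Real.add_one_le_exp u]
    calc (2/y) * ((y^2/(2*s)) * Real.exp (-(y^2/(2*s)))) ≤ (2/y) * 1 := by
          apply mul_le_mul_of_nonneg_left hue (by positivity)
      _ = 2/y := mul_one _
      _ ≤ 4/x := by
          rw [div_le_div_iff₀ hy0 hx]
          nlinarith
  case hbint => exact intervalIntegrable_const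
  case hdiff =>
    filter_upwards with θ hθ y hy
    rw [uIoc_eq] at hθ
    exact craig_deriv_aux θ (sin_sq_pos_of_mem hθ) y



lemma gaussQ_cont : Continuous gaussQ :=
  continuous_iff_continuousAt.mpr fun x => (gaussQ_hasDerivAt x).continuousAt

lemma gaussQ_eq_craig {x : ℝ} (hx : 0 ≤ x) : gaussQ x = craig x := by
  rcases eq_or_lt_of_le hx with h | h
  · rw [← h, gaussQ_zero, craig_zero]
  set H : ℝ → ℝ := fun y => gaussQ y - craig y with hH
  have hc : Continuous H := gaussQ_cont.sub craig_cont
  have hconst : ∀ ε ∈ Set.Ioo (0:ℝ) x, H x = H ε := by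
    intro ε hε
    have := constant_of_has_deriv_right_zero (f := H) (a := ε) (b := x)
      (hc.continuousOn) ?_ x (Set.right_mem_Icc.mpr hε.2.le)
    · exact this
    · intro y hy
      have hy0 : 0 < y := lt_of_lt_of_le hε.1 hy.1
      have := (gaussQ_hasDerivAt y).sub (craig_hasDerivAt y hy0)
      exact (by simpa using this.hasDerivWithinAt : HasDerivWithinAt (gaussQ - craig) 0 (Set.Ici y) y)
  have h1 : Tendsto H (nhdsWithin 0 (Set.Ioi 0)) (nhds (H 0)) :=
    (hc.continuousAt).continuousWithinAt.tendsto
  have h2 : Tendsto H (nhdsWithin 0 (Set.Ioi 0)) (nhds (H x)) := by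
    refine Tendsto.congr' ?_ tendsto_const_nhds
    filter_upwards [Ioo_mem_nhdsGT_of_mem (Set.left_mem_Ico.mpr h)] with ε hε
    exact hconst ε hε
  have := tendsto_nhds_unique h2 h1
  have hH0 : H 0 = 0 := by simp [hH, gaussQ_zero, craig_zero]
  rw [hH0] at this
  have : H x = 0 := this
  simpa [hH, sub_eq_zero] using this


lemma gauss_sq_mgf (μ : ℝ) (v : NNReal) (hv : 0 < v) (a : ℝ) (ha : 0 < a) :
    ∫ r, Real.exp (-(a * r^2)) ∂(gaussianReal μ v)
      = Real.sqrt (1/(1+2*a*(v:ℝ))) * Real.exp (-(a*μ^2)/(1+2*a*(v:ℝ))) := by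
  have hV : (0:ℝ) < (v:ℝ) := hv
  have hVne : (v:ℝ) ≠ 0 := ne_of_gt hV
  set b : ℝ := a + 1/(2*(v:ℝ)) with hbdef
  have hb : 0 < b := by positivity
  have hbne : b ≠ 0 := ne_of_gt hb
  have h2vb : 2*(v:ℝ)*b = 1 + 2*a*(v:ℝ) := by
    rw [hbdef]; field_simp; ring
  have hden : (0:ℝ) < 1 + 2*a*(v:ℝ) := by positivity
  set c : ℝ := μ/(2*(v:ℝ)*b) with hcdef
  set d : ℝ := -(a*μ^2)/(1+2*a*(v:ℝ)) with hddef
  -- reduce to Lebesgue integral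
  rw [gaussianReal_of_var_ne_zero μ (ne_of_gt hv)]
  have hpdf : gaussianPDF μ v = fun x => ((Real.toNNReal (gaussianPDFReal μ v x) : ℝ≥0) : ℝ≥0∞) := by
    funext x; rfl
  rw [hpdf, integral_withDensity_eq_integral_smul
    ((measurable_gaussianPDFReal μ v).real_toNNReal) _]
  have hsmul : ∀ r : ℝ, (Real.toNNReal (gaussianPDFReal μ v r)) • Real.exp (-(a * r^2))
      = ((Real.sqrt (2*π*(v:ℝ)))⁻¹ * Real.exp d) * Real.exp (-(b*(r-c)^2)) := by
    intro r
    rw [NNReal.smul_def, Real.coe_toNNReal _ (gaussianPDFReal_nonneg μ v r)]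
    unfold gaussianPDFReal
    rw [smul_eq_mul, mul_assoc, ← Real.exp_add]
    conv_rhs => rw [mul_assoc, ← Real.exp_add]
    congr 1
    congr 1
    have h1 : a + 1/(2*(v:ℝ)) ≠ 0 := hbdef ▸ hbne
    rw [hddef, hcdef, hbdef]
    field_simp
    ring
  simp_rw [hsmul]
  rw [MeasureTheory.integral_const_mul]
  have hshift : (∫ r : ℝ, Real.exp (-(b*(r-c)^2)))
      = ∫ r : ℝ, Real.exp (-(b*r^2)) :=
    integral_sub_right_eq_self (fun r => Real.exp (-(b*r^2))) c
  rw [hshift]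
  have hg : (∫ r : ℝ, Real.exp (-(b*r^2))) = Real.sqrt (π/b) := by
    simp_rw [← neg_mul]
    exact integral_gaussian b
  rw [hg]
  -- final algebra
  have hkey : (Real.sqrt (2*π*(v:ℝ)))⁻¹ * Real.sqrt (π/b) = Real.sqrt (1/(1+2*a*(v:ℝ))) := by
    rw [← Real.sqrt_inv, ← Real.sqrt_mul (by positivity)]
    congr 1
    rw [← h2vb]
    field_simp
  calc (Real.sqrt (2*π*(v:ℝ)))⁻¹ * Real.exp d * Real.sqrt (π/b)
      = ((Real.sqrt (2*π*(v:ℝ)))⁻¹ * Real.sqrt (π/b)) * Real.exp d := by ring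
    _ = Real.sqrt (1/(1+2*a*(v:ℝ))) * Real.exp d := by rw [hkey]

/-- Unconditional pairwise error probability: for R a real Gaussian with mean μ_R and
variance σ_R² > 0 and any ς > 0,
E[Q(√(R²/(2ς)))] = (1/π) ∫_0^{π/2} √(2ς sin²ϑ / (2ς sin²ϑ + σ_R²))
  · exp(-μ_R² / (4ς sin²ϑ + 2σ_R²)) dϑ. -/
theorem upep_integral_form
    (μ : ℝ) (v : NNReal) (hv : 0 < v) (ς : ℝ) (hς : 0 < ς) :
    ∫ r, gaussQ (Real.sqrt (r^2 / (2*ς))) ∂(gaussianReal μ v)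
      = (1/π) * ∫ ϑ in (0:ℝ)..(π/2),
          Real.sqrt (2 * ς * Real.sin ϑ ^ 2 / (2 * ς * Real.sin ϑ ^ 2 + (v : ℝ)))
            * Real.exp (-μ^2 / (4 * ς * Real.sin ϑ ^ 2 + 2 * (v : ℝ))) := by
  have hle : (0:ℝ) ≤ π/2 := by positivity
  have hQC : ∀ r : ℝ, gaussQ (Real.sqrt (r^2 / (2*ς)))
      = (1/π) * ∫ θ in Set.Ioc (0:ℝ) (π/2), Real.exp (-r^2/(4*ς*Real.sin θ^2)) := by
    intro r
    have h1 : Real.sqrt (r^2/(2*ς)) ^ 2 = r^2/(2*ς) := Real.sq_sqrt (by positivity)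
    have h2 : ∀ θ : ℝ, -(r^2/(2*ς))/(2*Real.sin θ^2) = -r^2/(4*ς*Real.sin θ^2) := by
      intro θ; ring
    rw [gaussQ_eq_craig (Real.sqrt_nonneg _), craig_def]
    simp_rw [h1, h2]
    rw [intervalIntegral.integral_of_le hle]
  simp_rw [hQC]
  rw [MeasureTheory.integral_const_mul]
  congr 1
  haveI hfin : IsFiniteMeasure (volume.restrict (Set.Ioc (0:ℝ) (π/2))) :=
    ⟨by rw [Measure.restrict_apply_univ]; simp [Real.volume_Ioc]⟩
  have hmeas : Measurable (fun p : ℝ × ℝ => Real.exp (-p.1^2/(4*ς*Real.sin p.2^2))) := by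
    apply Measurable.exp
    apply Measurable.div
    · exact ((measurable_fst.pow_const 2).neg)
    · exact ((Real.continuous_sin.measurable.comp measurable_snd).pow_const 2).const_mul (4*ς)
  have hint : Integrable (fun p : ℝ × ℝ => Real.exp (-p.1^2/(4*ς*Real.sin p.2^2)))
      ((gaussianReal μ v).prod (volume.restrict (Set.Ioc (0:ℝ) (π/2)))) := by
    refine MeasureTheory.Integrable.mono' (g := fun _ => (1:ℝ)) (integrable_const 1)
      hmeas.aestronglyMeasurable ?_
    filter_upwards with p
    rw [Real.norm_eq_abs, abs_of_pos (Real.exp_pos _)]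
    rw [show (1:ℝ) = Real.exp 0 by simp]
    apply Real.exp_le_exp.mpr
    apply div_nonpos_of_nonpos_of_nonneg
    · simp [sq_nonneg]
    · positivity
  have hswap := MeasureTheory.integral_integral_swap
    (f := fun r θ => Real.exp (-r^2/(4*ς*Real.sin θ^2))) hint
  rw [hswap]
  rw [intervalIntegral.integral_of_le hle]
  apply MeasureTheory.setIntegral_congr_fun measurableSet_Ioc
  intro θ hθ
  have hs : 0 < Real.sin θ ^ 2 := sin_sq_pos_of_mem hθ
  set s := Real.sin θ ^ 2 with hsdef
  have hsne : s ≠ 0 := ne_of_gt hs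
  have hrw : (fun r : ℝ => Real.exp (-r^2/(4*ς*s))) = fun r : ℝ => Real.exp (-(((4*ς*s)⁻¹) * r^2)) := by
    funext r
    congr 1
    ring
  show (∫ r, Real.exp (-r^2/(4*ς*s)) ∂(gaussianReal μ v)) = _
  rw [hrw, gauss_sq_mgf μ v hv ((4*ς*s)⁻¹) (by positivity)]
  have hden : (0:ℝ) < 1 + 2*(4*ς*s)⁻¹*(v:ℝ) := by positivity
  have hden2 : (0:ℝ) < 2*ς*s + (v:ℝ) := by positivity
  have hD : (4*ς*s : ℝ) ≠ 0 := by positivity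
  congr 1
  · congr 1
    rw [div_eq_div_iff (ne_of_gt hden) (ne_of_gt hden2)]
    field_simp
    try ring
  · congr 1
    rw [div_eq_div_iff (ne_of_gt hden) (by positivity : (0:ℝ) < 4*ς*s + 2*(v:ℝ)).ne']
    field_simp
    try ring
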